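/- Let h : ℝ^{d_in} → [0,∞) be continuous and let H be an affine hyperplane containing a point x₀ with h(x₀) > 0. Then the set {x ∈ H : h(x) > 0} cannot be covered by finitely many affine hyperplanes different from H. -/

import Mathlib

/-- if a continuous nonnegative function `h` is positive at a point of a
hyperplane `H`, then `{x ∈ H : h x > 0}` cannot be covered by finitely many
hyperplanes different from `H`. -/
theorem stmt5 (din : ℕ) (hdin : 1 ≤ din)
    (h : EuclideanSpace ℝ (Fin din) → ℝ) (hc : Continuous h) (hnn : ∀ x, 0 ≤ h x)
    (n : EuclideanSpace ℝ (Fin din)) (hn : n ≠ 0) (o : ℝ)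
    (x₀ : EuclideanSpace ℝ (Fin din)) (hx₀ : (inner ℝ n x₀ : ℝ) = o) (hpos : 0 < h x₀)
    (m : ℕ) (ns : Fin m → EuclideanSpace ℝ (Fin din)) (os : Fin m → ℝ)
    (hns : ∀ i, ns i ≠ 0)
    (hdiff : ∀ i, {x : EuclideanSpace ℝ (Fin din) | (inner ℝ (ns i) x : ℝ) = os i} ≠
      {x : EuclideanSpace ℝ (Fin din) | (inner ℝ n x : ℝ) = o}) :
    ¬ ({x : EuclideanSpace ℝ (Fin din) | (inner ℝ n x : ℝ) = o ∧ 0 < h x} ⊆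
        ⋃ i, {x : EuclideanSpace ℝ (Fin din) | (inner ℝ (ns i) x : ℝ) = os i}) := by
  intro hsub
  -- linear functionals
  set f : EuclideanSpace ℝ (Fin din) →ₗ[ℝ] ℝ := (innerSL ℝ n).toLinearMap with hf
  set g : Fin m → (EuclideanSpace ℝ (Fin din) →ₗ[ℝ] ℝ) := fun i => (innerSL ℝ (ns i)).toLinearMap with hg
  have hfapp : ∀ x : EuclideanSpace ℝ (Fin din), f x = (inner ℝ n x : ℝ) := fun x => rfl
  have hgapp : ∀ i (x : EuclideanSpace ℝ (Fin din)), g i x = (inner ℝ (ns i) x : ℝ) := fun i x => rfl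
  -- Step B : for each "bad" i (hyperplane through x₀) there is a direction in the
  -- hyperplane of n not killed by ns i
  have keyB : ∀ i : Fin m, (inner ℝ (ns i) x₀ : ℝ) = os i →
      ∃ w : EuclideanSpace ℝ (Fin din), (inner ℝ n w : ℝ) = 0 ∧ (inner ℝ (ns i) w : ℝ) ≠ 0 := by
    intro i hi
    by_contra hw
    push_neg at hw
    have hker : LinearMap.ker f ≤ LinearMap.ker (g i) := by
      intro w hwmem
      rw [LinearMap.mem_ker] at hwmem ⊢
      exact hw w hwmem
    have hinf : ⨅ _ : Unit, LinearMap.ker f ≤ LinearMap.ker (g i) := by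
      simpa using hker
    have hspan := mem_span_of_iInf_ker_le_ker (L := fun _ : Unit => f) (K := g i) hinf
    rw [Set.range_const, Submodule.mem_span_singleton] at hspan
    obtain ⟨c, hc'⟩ := hspan
    have hc0 : c ≠ 0 := by
      intro hc0
      have : g i (ns i) = 0 := by rw [← hc', hc0]; simp
      rw [hgapp] at this
      exact (inner_self_ne_zero.2 (hns i)) this
    apply hdiff i
    ext x
    simp only [Set.mem_setOf_eq]
    have hx1 : (inner ℝ (ns i) x : ℝ) = c * (inner ℝ n x : ℝ) := by
      rw [← hfapp, ← hgapp, ← hc']; simp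
    have hx2 : os i = c * o := by
      rw [← hi, ← hx₀, ← hfapp, ← hgapp, ← hc']; simp
    rw [hx1, hx2]
    constructor
    · intro hcc; exact mul_left_cancel₀ hc0 hcc
    · intro hcc; rw [hcc]
  -- Step C : a single direction v in the hyperplane of n avoiding all bad kernels
  have keyC : ∃ v : EuclideanSpace ℝ (Fin din), (inner ℝ n v : ℝ) = 0 ∧
      ∀ i, (inner ℝ (ns i) x₀ : ℝ) = os i → (inner ℝ (ns i) v : ℝ) ≠ 0 := by
    by_contra hv
    push_neg at hv
    set K := LinearMap.ker f with hK
    let p : {i : Fin m // (inner ℝ (ns i) x₀ : ℝ) = os i} → Subspace ℝ K :=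
      fun j => LinearMap.ker ((g j.1).comp K.subtype)
    have hcov : ⋃ j, (p j : Set K) = Set.univ := by
      ext w
      simp only [Set.mem_univ, iff_true, Set.mem_iUnion, SetLike.mem_coe,
        LinearMap.mem_ker, LinearMap.comp_apply, Submodule.coe_subtype, p]
      have hw0 : (inner ℝ n (w : EuclideanSpace ℝ (Fin din)) : ℝ) = 0 := by
        exact w.2
      obtain ⟨i, hi1, hi2⟩ := hv (w : EuclideanSpace ℝ (Fin din)) hw0
      exact ⟨⟨i, hi1⟩, hi2⟩
    obtain ⟨j, hj⟩ := Subspace.exists_eq_top_of_iUnion_eq_univ hcov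
    obtain ⟨w, hw1, hw2⟩ := keyB j.1 j.2
    have hwK : w ∈ K := by rw [hK, LinearMap.mem_ker]; exact hw1
    have : (⟨w, hwK⟩ : K) ∈ p j := by rw [hj]; trivial
    simp only [LinearMap.mem_ker, LinearMap.comp_apply, Submodule.coe_subtype, p] at this
    exact hw2 this
  obtain ⟨v, hv0, hvbad⟩ := keyC
  -- Step A : small ball around x₀ where h is positive
  have hopen : IsOpen {x : EuclideanSpace ℝ (Fin din) | 0 < h x} := isOpen_lt continuous_const hc
  obtain ⟨ε, hε, hball⟩ := Metric.isOpen_iff.1 hopen x₀ hpos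
  -- Step D : choose a parameter t avoiding finitely many exceptional values
  set T : Finset ℝ := insert 0 (Finset.image
    (fun i => (os i - (inner ℝ (ns i) x₀ : ℝ)) / (inner ℝ (ns i) v : ℝ)) Finset.univ) with hT
  have hδ : (0 : ℝ) < ε / (‖v‖ + 1) := by positivity
  have hinf : (Set.Ioo (0:ℝ) (ε / (‖v‖ + 1))).Infinite := Set.Ioo_infinite hδ
  obtain ⟨t, ht⟩ := (hinf.diff (T : Set ℝ).toFinite).nonempty
  obtain ⟨⟨ht1, ht2⟩, htT⟩ := ht
  set y : EuclideanSpace ℝ (Fin din) := x₀ + t • v with hy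
  have hyn : (inner ℝ n y : ℝ) = o := by
    rw [hy, inner_add_right, real_inner_smul_right, hv0, hx₀]; ring
  have hdist : dist y x₀ < ε := by
    rw [hy, dist_eq_norm]
    simp only [add_sub_cancel_left, norm_smul, Real.norm_eq_abs]
    have h1 : |t| = t := abs_of_pos ht1
    have h2 : ‖v‖ ≤ ‖v‖ + 1 := by linarith
    calc |t| * ‖v‖ ≤ |t| * (‖v‖ + 1) := by
          apply mul_le_mul_of_nonneg_left h2 (abs_nonneg t)
      _ < ε := by
          rw [h1]
          calc t * (‖v‖ + 1) < (ε / (‖v‖ + 1)) * (‖v‖ + 1) := by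
                apply mul_lt_mul_of_pos_right ht2 (by positivity)
            _ = ε := by field_simp
  have hhy : 0 < h y := hball hdist
  have hymem : y ∈ {x : EuclideanSpace ℝ (Fin din) | (inner ℝ n x : ℝ) = o ∧ 0 < h x} := ⟨hyn, hhy⟩
  obtain ⟨i, hiy⟩ := Set.mem_iUnion.1 (hsub hymem)
  rw [Set.mem_setOf_eq] at hiy
  have hiy' : (inner ℝ (ns i) x₀ : ℝ) + t * (inner ℝ (ns i) v : ℝ) = os i := by
    rw [← hiy, hy, inner_add_right, real_inner_smul_right]
  by_cases hgi : (inner ℝ (ns i) v : ℝ) = 0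
  · have hbadi : (inner ℝ (ns i) x₀ : ℝ) = os i := by
      rw [← hiy']; rw [hgi]; ring
    exact hvbad i hbadi hgi
  · have ht' : t = (os i - (inner ℝ (ns i) x₀ : ℝ)) / (inner ℝ (ns i) v : ℝ) := by
      rw [eq_div_iff hgi]
      linarith [hiy']
    apply htT
    rw [hT]
    simp only [Finset.coe_insert, Set.mem_insert_iff, Finset.coe_image, Set.mem_image,
      Finset.mem_coe, Finset.mem_univ]
    right
    exact ⟨i, Set.mem_univ i, ht'.symm⟩
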